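/- If A is a commutative ring that is finitely generated as a Z-algebra, then the residue field A/q of any maximal ideal q is a finite field. -/

import Mathlib

/-- `ℤ` is a Jacobson ring. -/
lemma int_isJacobsonRing : IsJacobsonRing ℤ := by
  rw [isJacobsonRing_iff_prime_eq]
  intro P hP
  by_cases hbot : P = ⊥
  · subst hbot
    refine le_antisymm (fun x hx => ?_) Ideal.le_jacobson
    have h1 := (Ideal.mem_jacobson_bot.mp hx) 1
    have h2 := (Ideal.mem_jacobson_bot.mp hx) (-1)
    rw [Int.isUnit_iff] at h1 h2
    simp only [Ideal.mem_bot]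
    omega
  · haveI : P.IsMaximal := hP.isMaximal hbot
    exact Ideal.jacobson_eq_self_of_isMaximal

/-- If `A` is a finitely generated `ℤ`-algebra and `q` a maximal ideal of `A`,
then the residue field `A/q` is finite. -/
theorem stmt4 (A : Type*) [CommRing A] [Algebra.FiniteType ℤ A]
    (q : Ideal A) (hq : q.IsMaximal) : Finite (A ⧸ q) := by
  letI := Ideal.Quotient.field q
  haveI : IsJacobsonRing ℤ := int_isJacobsonRing
  haveI : Algebra.FiniteType ℤ (A ⧸ q) :=
    Algebra.FiniteType.of_surjective
      (Ideal.Quotient.mkₐ ℤ q) (Ideal.Quotient.mkₐ_surjective ℤ q)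
  haveI : Module.Finite ℤ (A ⧸ q) := finite_of_finite_type_of_isJacobsonRing ℤ (A ⧸ q)
  haveI : Algebra.IsIntegral ℤ (A ⧸ q) := Algebra.IsIntegral.of_finite ℤ (A ⧸ q)
  haveI : (⊥ : Ideal (A ⧸ q)).IsMaximal := Ideal.bot_isMaximal
  -- the kernel of ℤ → A⧸q is a maximal ideal of ℤ, hence nonzero
  have hmax : (Ideal.comap (algebraMap ℤ (A ⧸ q)) ⊥).IsMaximal :=
    Ideal.isMaximal_comap_of_isIntegral_of_isMaximal (⊥ : Ideal (A ⧸ q))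
  have hne : (Ideal.comap (algebraMap ℤ (A ⧸ q)) ⊥) ≠ ⊥ := by
    intro h
    rw [h] at hmax
    have : IsField ℤ := Ring.isField_iff_isSimpleOrder_ideal.mpr
      ⟨fun I => or_iff_not_imp_left.mpr fun hI =>
        hmax.out.2 I (bot_lt_iff_ne_bot.mpr hI)⟩
    exact Int.not_isField this
  obtain ⟨n, hn, hn0⟩ := Submodule.exists_mem_ne_zero_of_ne_bot hne
  have hnK : ((n : ℤ) : A ⧸ q) = 0 := by
    have := Ideal.mem_comap.mp hn
    rwa [Ideal.mem_bot, show algebraMap ℤ (A ⧸ q) n = ((n : ℤ) : A ⧸ q) from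
      eq_intCast (algebraMap ℤ (A ⧸ q)) n] at this
  apply Module.finite_of_fg_torsion
  intro x
  refine ⟨⟨n, mem_nonZeroDivisors_of_ne_zero hn0⟩, ?_⟩
  show n • x = 0
  rw [zsmul_eq_mul, hnK, zero_mul]
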